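/- Let y ∈ ℕ^n have independent coordinates y_i ~ Poisson(T·(ADθ*)_i), where T > 2n log p, the sensing matrix A satisfies the sensing-matrix construction with constants a_ℓ < a_u and Ã, the upper RIP holds for ÃD with constant δ_{K̃} (so that Σ_{i=1}^n (AD)_{ij}² ≤ M/n with M = (1+δ_{K̃})/(4(a_u − a_ℓ)²) for each j ≥ 2), and f* = Dθ* satisfies f* ⪰ 0 and ‖f*‖₁ = 1. Then with probability at least 1 − 2/(p−1), ‖(2n/T)·(y − T·ADθ*)^⊤ A D̄‖_∞ ≤ √(32 M log p / T). -/

import Mathlib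

open scoped BigOperators ENNReal NNReal
open MeasureTheory ProbabilityTheory Finset

section AuxPoisson
open scoped NNReal ENNReal
open MeasureTheory ProbabilityTheory Real

lemma poisson_exp_hasSum (r : ℝ≥0) (s : ℝ) :
    HasSum (fun k : ℕ => poissonPMFReal r k * Real.exp (s * k))
      (Real.exp ((r:ℝ) * (Real.exp s - 1))) := by
  have h : ∀ k : ℕ, poissonPMFReal r k * Real.exp (s * k)
      = Real.exp (-(r:ℝ)) * (((r:ℝ) * Real.exp s) ^ k / k.factorial) := by
    intro k
    simp only [poissonPMFReal]
    rw [mul_comm s (k:ℝ), Real.exp_nat_mul, mul_pow]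
    ring
  have h2 : HasSum (fun k : ℕ => ((r:ℝ) * Real.exp s) ^ k / k.factorial)
      (Real.exp ((r:ℝ) * Real.exp s)) := by
    rw [Real.exp_eq_exp_ℝ]
    exact NormedSpace.expSeries_div_hasSum_exp _
  have := h2.mul_left (Real.exp (-(r:ℝ)))
  rw [← Real.exp_add] at this
  have heq : (fun k : ℕ => poissonPMFReal r k * Real.exp (s * k))
      = fun k : ℕ => Real.exp (-(r:ℝ)) * (((r:ℝ) * Real.exp s) ^ k / k.factorial) :=
    funext h
  rw [heq]
  convert this using 2
  rfl
  ring

lemma poisson_exp_integrable (r : ℝ≥0) (s : ℝ) :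
    Integrable (fun k : ℕ => Real.exp (s * k)) (poissonMeasure r) := by
  constructor
  · exact (measurable_from_top (f := fun k : ℕ => Real.exp (s * k))).aestronglyMeasurable
  · rw [hasFiniteIntegral_iff_norm]
    rw [MeasureTheory.lintegral_countable']
    have hsum := (poisson_exp_hasSum r s).summable
    have key : ∀ k : ℕ, ENNReal.ofReal ‖Real.exp (s * k)‖ * (poissonMeasure r) {k}
        = ENNReal.ofReal (poissonPMFReal r k * Real.exp (s * k)) := by
      intro k
      rw [show (poissonMeasure r) {k} = ENNReal.ofReal (poissonPMFReal r k) from ?_]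
      · rw [Real.norm_eq_abs, abs_of_pos (Real.exp_pos _),
          ← ENNReal.ofReal_mul (Real.exp_pos _).le, mul_comm]
      · rw [poissonMeasure_singleton]
        rfl
    simp_rw [key]
    rw [← ENNReal.ofReal_tsum_of_nonneg
      (fun k => mul_nonneg poissonPMFReal_nonneg (Real.exp_pos _).le) hsum]
    exact ENNReal.ofReal_lt_top

lemma poisson_exp_integral (r : ℝ≥0) (s : ℝ) :
    ∫ k : ℕ, Real.exp (s * k) ∂(poissonMeasure r)
      = Real.exp ((r:ℝ) * (Real.exp s - 1)) := by
  rw [integral_poissonMeasure' (poisson_exp_integrable r s)]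
  have : ∀ k : ℕ, (Real.exp (-(r:ℝ)) * (r:ℝ) ^ k / (k.factorial : ℝ)) • Real.exp (s * k)
      = poissonPMFReal r k * Real.exp (s * k) := by
    intro k
    rw [smul_eq_mul]
    rfl
  simp_rw [this]
  exact (poisson_exp_hasSum r s).tsum_eq

lemma exp_sub_one_sub_le {x : ℝ} (hx : |x| ≤ 1) : Real.exp x - 1 - x ≤ x ^ 2 := by
  have h := Real.exp_bound hx (n := 2) (by norm_num)
  have h2 : ∑ m ∈ Finset.range 2, x ^ m / m.factorial = 1 + x := by
    simp [Finset.sum_range_succ]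
  rw [h2] at h
  have := abs_le.mp h
  have h3 := this.2
  have h4 : |x| ^ 2 = x ^ 2 := sq_abs x
  have : ((Nat.succ 2 : ℕ) : ℝ) / ((Nat.factorial 2 : ℕ) * (2:ℕ)) = 3/4 := by norm_num [Nat.factorial]
  rw [this, h4] at h3
  nlinarith [sq_nonneg x]

section Chernoff
variable {Ω : Type*} [MeasurableSpace Ω] (P : Measure Ω) [IsProbabilityMeasure P]
  {n : ℕ} (y : Fin n → Ω → ℕ) (r : Fin n → ℝ≥0) (c : Fin n → ℝ)

lemma exp_mul_integrable (hmeas : ∀ i, Measurable (y i))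
    (hlaw : ∀ i, Measure.map (y i) P = poissonMeasure (r i)) (l : ℝ) (i : Fin n) :
    Integrable (fun ω => Real.exp (l * (c i * ((y i ω : ℝ) - (r i : ℝ))))) P := by
  have hg : Integrable (fun k : ℕ => Real.exp ((l * c i) * k)) (Measure.map (y i) P) := by
    rw [hlaw i]; exact poisson_exp_integrable _ _
  have h2 : Integrable (fun ω => Real.exp ((l * c i) * (y i ω : ℝ))) P := by
    rw [← Function.comp_def (fun k : ℕ => Real.exp ((l * c i) * k)) (y i)]
    exact (integrable_map_measure
      (measurable_from_top (f := fun k : ℕ => Real.exp ((l * c i) * k))).aestronglyMeasurable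
      (hmeas i).aemeasurable).mp hg
  have h3 := h2.const_mul (Real.exp (-(l * c i * (r i : ℝ))))
  refine h3.congr (ae_of_all _ fun ω => ?_)
  simp only [← Real.exp_add]
  congr 1; ring

lemma exp_mul_integral (hmeas : ∀ i, Measurable (y i))
    (hlaw : ∀ i, Measure.map (y i) P = poissonMeasure (r i)) (l : ℝ) (i : Fin n) :
    mgf (fun ω => c i * ((y i ω : ℝ) - (r i : ℝ))) P l
      = Real.exp ((r i : ℝ) * (Real.exp (l * c i) - 1 - l * c i)) := by
  unfold mgf
  have step1 : ∀ ω, Real.exp (l * (c i * ((y i ω : ℝ) - (r i : ℝ))))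
      = Real.exp (-(l * c i * (r i : ℝ))) * Real.exp ((l * c i) * (y i ω : ℝ)) := by
    intro ω; rw [← Real.exp_add]; ring_nf
  simp_rw [step1]
  rw [integral_const_mul]
  have : ∫ ω, Real.exp ((l * c i) * (y i ω : ℝ)) ∂P
      = ∫ k : ℕ, Real.exp ((l * c i) * k) ∂(Measure.map (y i) P) := by
    rw [integral_map (hmeas i).aemeasurable
      (measurable_from_top (f := fun k : ℕ => Real.exp ((l * c i) * k))).aestronglyMeasurable]
  rw [this, hlaw i, poisson_exp_integral, ← Real.exp_add]
  congr 1; ring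

lemma weighted_poisson_mgf_le (hmeas : ∀ i, Measurable (y i))
    (hlaw : ∀ i, Measure.map (y i) P = poissonMeasure (r i))
    (hindep : iIndepFun y P)
    (l v : ℝ) (hc : ∀ i, |l * c i| ≤ 1) (hv : ∑ i, (r i : ℝ) * c i ^ 2 ≤ v) :
    mgf (∑ i, fun ω => c i * ((y i ω : ℝ) - (r i : ℝ))) P l ≤ Real.exp (l ^ 2 * v) := by
  have hXmeas : ∀ i, Measurable (fun ω => c i * ((y i ω : ℝ) - (r i : ℝ))) := fun i =>
    ((measurable_from_top.comp (hmeas i)).sub measurable_const).const_mul _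
  have hind2 : iIndepFun
      (fun i => fun ω => c i * ((y i ω : ℝ) - (r i : ℝ))) P := by
    exact hindep.comp (fun i (k : ℕ) => c i * ((k : ℝ) - (r i : ℝ)))
      (fun i => measurable_from_top)
  rw [iIndepFun.mgf_sum hind2 hXmeas]
  calc ∏ i, mgf (fun ω => c i * ((y i ω : ℝ) - (r i : ℝ))) P l
      = ∏ i, Real.exp ((r i : ℝ) * (Real.exp (l * c i) - 1 - l * c i)) := by
        exact Finset.prod_congr rfl fun i _ => exp_mul_integral P y r c hmeas hlaw l i
    _ ≤ ∏ i, Real.exp ((r i : ℝ) * (l * c i) ^ 2) := by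
        refine Finset.prod_le_prod (fun i _ => (Real.exp_pos _).le) fun i _ => ?_
        exact Real.exp_le_exp.mpr (mul_le_mul_of_nonneg_left
          (exp_sub_one_sub_le (hc i)) (r i).coe_nonneg)
    _ = Real.exp (∑ i, (r i : ℝ) * (l * c i) ^ 2) := by rw [← Real.exp_sum]
    _ ≤ Real.exp (l ^ 2 * v) := by
        refine Real.exp_le_exp.mpr ?_
        calc ∑ i, (r i : ℝ) * (l * c i) ^ 2 = l ^ 2 * ∑ i, (r i : ℝ) * c i ^ 2 := by
              rw [Finset.mul_sum]; exact Finset.sum_congr rfl fun i _ => by ring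
          _ ≤ l ^ 2 * v := mul_le_mul_of_nonneg_left hv (sq_nonneg l)

lemma weighted_poisson_tail (hmeas : ∀ i, Measurable (y i))
    (hlaw : ∀ i, Measure.map (y i) P = poissonMeasure (r i))
    (hindep : iIndepFun y P)
    (l t v : ℝ) (hl : 0 ≤ l)
    (hc : ∀ i, |l * c i| ≤ 1) (hv : ∑ i, (r i : ℝ) * c i ^ 2 ≤ v) :
    (P {ω | t ≤ |∑ i, c i * ((y i ω : ℝ) - (r i : ℝ))|}).toReal
      ≤ 2 * Real.exp (-(l * t) + l ^ 2 * v) := by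
  set Z : Ω → ℝ := ∑ i, fun ω => c i * ((y i ω : ℝ) - (r i : ℝ)) with hZ
  have hZapp : ∀ ω, Z ω = ∑ i, c i * ((y i ω : ℝ) - (r i : ℝ)) := fun ω => by
    rw [hZ, Finset.sum_apply]
  have hint : ∀ s : ℝ, Integrable (fun ω => Real.exp (s * Z ω)) P := by
    intro s
    have := iIndepFun.integrable_exp_mul_sum (t := s)
      (hindep.comp (fun i (k : ℕ) => c i * ((k : ℝ) - (r i : ℝ))) fun i => measurable_from_top)
      (fun i => ((measurable_from_top.comp (hmeas i)).sub measurable_const).const_mul _)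
      (s := Finset.univ) (fun i _ => exp_mul_integrable P y r c hmeas hlaw s i)
    exact this
  have hsub : {ω | t ≤ |∑ i, c i * ((y i ω : ℝ) - (r i : ℝ))|}
      ⊆ {ω | t ≤ Z ω} ∪ {ω | Z ω ≤ -t} := by
    intro ω hω
    simp only [Set.mem_setOf_eq, ← hZapp ω] at hω
    rcases abs_cases (Z ω) with ⟨h1, _⟩ | ⟨h1, _⟩
    · left; exact Set.mem_setOf_eq ▸ (h1 ▸ hω)
    · right; simp only [Set.mem_setOf_eq]; linarith [h1 ▸ hω]
  have hup : (P {ω | t ≤ Z ω}).toReal ≤ Real.exp (-(l * t) + l ^ 2 * v) := by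
    calc (P {ω | t ≤ Z ω}).toReal ≤ Real.exp (-l * t) * mgf Z P l :=
          measure_ge_le_exp_mul_mgf t hl (hint l)
      _ ≤ Real.exp (-l * t) * Real.exp (l ^ 2 * v) := by
          exact mul_le_mul_of_nonneg_left
            (weighted_poisson_mgf_le P y r c hmeas hlaw hindep l v hc hv) (Real.exp_pos _).le
      _ = Real.exp (-(l * t) + l ^ 2 * v) := by rw [← Real.exp_add]; ring_nf
  have hlo : (P {ω | Z ω ≤ -t}).toReal ≤ Real.exp (-(l * t) + l ^ 2 * v) := by
    calc (P {ω | Z ω ≤ -t}).toReal ≤ Real.exp (-(-l) * (-t)) * mgf Z P (-l) :=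
          measure_le_le_exp_mul_mgf (-t) (neg_nonpos.mpr hl) (hint (-l))
      _ ≤ Real.exp (-(-l) * (-t)) * Real.exp ((-l) ^ 2 * v) := by
          refine mul_le_mul_of_nonneg_left ?_ (Real.exp_pos _).le
          refine weighted_poisson_mgf_le P y r c hmeas hlaw hindep (-l) v ?_ hv
          intro i; rw [neg_mul, abs_neg]; exact hc i
      _ = Real.exp (-(l * t) + l ^ 2 * v) := by rw [← Real.exp_add]; ring_nf
  have hP : P {ω | t ≤ |∑ i, c i * ((y i ω : ℝ) - (r i : ℝ))|}
      ≤ P {ω | t ≤ Z ω} + P {ω | Z ω ≤ -t} :=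
    (measure_mono hsub).trans (measure_union_le _ _)
  have := ENNReal.toReal_mono (by finiteness) hP
  rw [ENNReal.toReal_add (by finiteness) (by finiteness)] at this
  linarith

end Chernoff

end AuxPoisson

/-- The embedding of coordinate indices `{1, …, p−1}` (i.e. coordinates `2, …, p`)
into `Fin p`. -/
def finShift {p : ℕ} (j : Fin (p - 1)) : Fin p :=
  ⟨j.val + 1, by have := j.isLt; omega⟩

set_option maxHeartbeats 2000000 in
/-- With `y_i` independent Poisson with means `T(Af*)_i`, `T > 2n log p`,
the sensing-matrix construction and upper RIP in force, and `f* = Dθ*` nonnegative with unit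
`ℓ₁`-norm, with probability at least `1 − 2/(p−1)` one has
`‖(2n/T)(y − TADθ*)ᵀ A D̄‖_∞ ≤ √(32 M log p / T)` where `M = (1+δ)/(4(a_u−a_ℓ)²)`. -/
theorem lasso_tuning_parameter_bound
    {Ω : Type*} [MeasurableSpace Ω] (P : Measure Ω) [IsProbabilityMeasure P]
    (n p : ℕ) (hn : 0 < n) (hp : 2 ≤ p)
    (T : ℝ) (hT : 2 * n * Real.log p < T)
    (aℓ au : ℝ) (hau : aℓ < au)
    (Atil A : Matrix (Fin n) (Fin p) ℝ)
    (hAtil : ∀ i j, Atil i j ∈ Set.Icc (aℓ / Real.sqrt n) (au / Real.sqrt n))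
    (hA : A = (2 * (au - aℓ) * Real.sqrt n)⁻¹ •
      (Atil + Matrix.of fun _ _ => (au - 2 * aℓ) / Real.sqrt n))
    (D : Matrix (Fin p) (Fin p) ℝ) (hD : D.transpose * D = 1)
    (hD1 : ∀ i, D i ⟨0, by omega⟩ = 1 / Real.sqrt p)
    (K : ℕ) (hK : 1 ≤ K) (δ : ℝ) (hδ : 0 < δ)
    (hRIP : ∀ u : Fin p → ℝ, (Finset.univ.filter fun j => u j ≠ 0).card ≤ 2 * K →
      ∑ i, (Atil.mulVec (D.mulVec u) i) ^ 2 ≤ (1 + δ) * ∑ j, (u j) ^ 2)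
    (fstar : Fin p → ℝ) (hfpos : ∀ j, 0 ≤ fstar j) (hf1 : ∑ j, |fstar j| = 1)
    (y : Fin n → Ω → ℕ)
    (hmeas : ∀ i, Measurable (y i))
    (hlaw : ∀ i, Measure.map (y i) P = poissonMeasure (T * A.mulVec fstar i).toNNReal)
    (hindep : iIndepFun y P) :
    ENNReal.ofReal (1 - 2 / ((p : ℝ) - 1)) ≤
      P {ω | ∀ j : Fin (p - 1),
        |(2 * n / T) * ∑ i, ((y i ω : ℝ) - T * A.mulVec fstar i) * (A * D) i (finShift j)| ≤
          Real.sqrt (32 * ((1 + δ) / (4 * (au - aℓ) ^ 2)) * Real.log p / T)} := by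
  classical
  -- basic positivity
  have hp1 : (2:ℝ) ≤ (p:ℝ) := by exact_mod_cast hp
  have hlogp : 0 < Real.log p := Real.log_pos (by linarith)
  have hn0 : (0:ℝ) < (n:ℝ) := by exact_mod_cast hn
  have hT0 : (0:ℝ) < T := lt_trans (by positivity) hT
  have hd : (0:ℝ) < au - aℓ := sub_pos.mpr hau
  have hs : (0:ℝ) < Real.sqrt n := Real.sqrt_pos.mpr hn0
  have hss : Real.sqrt n * Real.sqrt n = (n:ℝ) := Real.mul_self_sqrt hn0.le
  set M : ℝ := (1 + δ) / (4 * (au - aℓ) ^ 2) with hMdef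
  have hM : 0 < M := div_pos (by linarith) (by positivity)
  set t : ℝ := Real.sqrt (32 * M * Real.log p / T) with htdef
  have ht0 : 0 ≤ t := Real.sqrt_nonneg _
  have ht2 : t ^ 2 = 32 * M * Real.log p / T := Real.sq_sqrt (by positivity)
  set l : ℝ := t * T / (8 * M) with hldef
  have hl0 : 0 ≤ l := by positivity
  set v : ℝ := 4 * M / T with hvdef
  -- entries of A are in [1/(2n), 1/n]
  have hAval : ∀ i j, A i j = (Atil i j + (au - 2 * aℓ) / Real.sqrt n) /
      (2 * (au - aℓ) * Real.sqrt n) := by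
    intro i j
    rw [hA]
    simp only [Matrix.smul_apply, Matrix.add_apply, Matrix.of_apply, smul_eq_mul]
    rw [inv_mul_eq_div]
  have hAlb : ∀ i j, 1 / (2 * (n:ℝ)) ≤ A i j := by
    intro i j
    rw [hAval i j]
    have h1 : (au - aℓ) / Real.sqrt n ≤ Atil i j + (au - 2 * aℓ) / Real.sqrt n := by
      have h := (hAtil i j).1
      have he : (au - aℓ) / Real.sqrt n = aℓ / Real.sqrt n + (au - 2 * aℓ) / Real.sqrt n := by
        field_simp; ring
      linarith
    have h2 : 1 / (2 * (n:ℝ)) = ((au - aℓ) / Real.sqrt n) / (2 * (au - aℓ) * Real.sqrt n) := by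
      field_simp
      nlinarith [hss]
    rw [h2]
    exact div_le_div_of_nonneg_right h1 (by positivity)
  have hAub : ∀ i j, A i j ≤ 1 / (n:ℝ) := by
    intro i j
    rw [hAval i j]
    have h1 : Atil i j + (au - 2 * aℓ) / Real.sqrt n ≤ 2 * (au - aℓ) / Real.sqrt n := by
      have h := (hAtil i j).2
      have he : 2 * (au - aℓ) / Real.sqrt n = au / Real.sqrt n + (au - 2 * aℓ) / Real.sqrt n := by
        field_simp; ring
      linarith
    have h2 : (1:ℝ) / (n:ℝ) = (2 * (au - aℓ) / Real.sqrt n) / (2 * (au - aℓ) * Real.sqrt n) := by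
      field_simp
      nlinarith [hss]
    rw [h2]
    exact div_le_div_of_nonneg_right h1 (by positivity)
  -- bounds on the Poisson means
  set μ : Fin n → ℝ := fun i => A.mulVec fstar i with hμdef
  have hfsum : ∑ j, fstar j = 1 := by
    rw [← hf1]; exact Finset.sum_congr rfl fun j _ => (abs_of_nonneg (hfpos j)).symm
  have hμeq : ∀ i, μ i = ∑ j, A i j * fstar j := fun i => rfl
  have hμ0 : ∀ i, 0 ≤ μ i := by
    intro i
    rw [hμeq i]
    refine Finset.sum_nonneg fun j _ => mul_nonneg ?_ (hfpos j)
    exact le_trans (by positivity) (hAlb i j)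
  have hμub : ∀ i, μ i ≤ 1 / (n:ℝ) := by
    intro i
    calc μ i = ∑ j, A i j * fstar j := hμeq i
      _ ≤ ∑ j, (1 / (n:ℝ)) * fstar j :=
          Finset.sum_le_sum fun j _ => mul_le_mul_of_nonneg_right (hAub i j) (hfpos j)
      _ = 1 / (n:ℝ) := by rw [← Finset.mul_sum, hfsum, mul_one]
  set r : Fin n → ℝ≥0 := fun i => (T * A.mulVec fstar i).toNNReal with hrdef
  have hri : ∀ i, ((r i : ℝ≥0) : ℝ) = T * μ i := fun i =>
    Real.coe_toNNReal _ (mul_nonneg hT0.le (hμ0 i))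
  -- column bound for B = A * D
  set B : Matrix (Fin n) (Fin p) ℝ := A * D with hBdef
  have hj0 : ∀ j' : Fin (p - 1), finShift j' ≠ (⟨0, by omega⟩ : Fin p) := by
    intro j' h
    have : (finShift j').val = 0 := congrArg Fin.val h
    simp [finShift] at this
  have hDsum : ∀ j' : Fin (p - 1), ∑ k, D k (finShift j') = 0 := by
    intro j'
    have h := congrFun (congrFun hD ⟨0, by omega⟩) (finShift j')
    rw [Matrix.mul_apply] at h
    simp only [Matrix.transpose_apply] at h
    rw [Matrix.one_apply_ne (Ne.symm (hj0 j'))] at h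
    have hcast : ∑ k, D k ⟨0, by omega⟩ * D k (finShift j')
        = (1 / Real.sqrt p) * ∑ k, D k (finShift j') := by
      rw [Finset.mul_sum]
      exact Finset.sum_congr rfl fun k _ => by rw [hD1 k]
    rw [hcast] at h
    have hsp : (0:ℝ) < Real.sqrt p := Real.sqrt_pos.mpr (by positivity)
    have := mul_eq_zero.mp h
    rcases this with h' | h'
    · exact absurd h' (by positivity)
    · exact h'
  have hcol : ∀ j' : Fin (p - 1), ∑ i, (B i (finShift j')) ^ 2 ≤ M / n := by
    intro j'
    set j : Fin p := finShift j' with hjdef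
    -- B i j as a scalar multiple of Atil.mulVec of column j of D
    have hBij : ∀ i, B i j = (2 * (au - aℓ) * Real.sqrt n)⁻¹ *
        Atil.mulVec (fun k => D k j) i := by
      intro i
      rw [hBdef, Matrix.mul_apply]
      have hterm : ∀ k, A i k * D k j
          = (2 * (au - aℓ) * Real.sqrt n)⁻¹ * (Atil i k * D k j)
            + ((2 * (au - aℓ) * Real.sqrt n)⁻¹ * ((au - 2 * aℓ) / Real.sqrt n)) * D k j := by
        intro k
        rw [hAval i k]
        field_simp
      rw [Finset.sum_congr rfl fun k _ => hterm k, Finset.sum_add_distrib,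
        ← Finset.mul_sum, ← Finset.mul_sum, hDsum j', mul_zero, add_zero]
      rfl
    -- apply the RIP to the standard basis vector at j
    have hcard : (Finset.univ.filter fun m => (Pi.single j 1 : Fin p → ℝ) m ≠ 0).card ≤ 2 * K := by
      have hsub : (Finset.univ.filter fun m => (Pi.single j 1 : Fin p → ℝ) m ≠ 0) ⊆ {j} := by
        intro m hm
        simp only [Finset.mem_filter, Pi.single_apply] at hm
        rcases hm with ⟨_, hm⟩
        by_contra hmj
        simp only [Finset.mem_singleton] at hmj
        rw [if_neg hmj] at hm
        exact hm rfl
      calc _ ≤ ({j} : Finset (Fin p)).card := Finset.card_le_card hsub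
        _ = 1 := Finset.card_singleton j
        _ ≤ 2 * K := by omega
    have hDu : D.mulVec ((Pi.single j 1 : Fin p → ℝ)) = fun k => D k j := by
      funext k
      rw [Matrix.mulVec, dotProduct]
      rw [Finset.sum_eq_single j (fun m _ hm => by simp [Pi.single_apply, hm])
        (fun h => absurd (Finset.mem_univ j) h)]
      simp
    have hsq : ∑ m, ((Pi.single j 1 : Fin p → ℝ) m) ^ 2 = 1 := by
      rw [Finset.sum_eq_single j (fun m _ hm => by simp [Pi.single_apply, hm])
        (fun h => absurd (Finset.mem_univ j) h)]
      simp
    have hr2 := hRIP ((Pi.single j 1 : Fin p → ℝ)) hcard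
    rw [hDu, hsq, mul_one] at hr2
    calc ∑ i, (B i j) ^ 2
        = (2 * (au - aℓ) * Real.sqrt n)⁻¹ ^ 2 * ∑ i, (Atil.mulVec (fun k => D k j) i) ^ 2 := by
          rw [Finset.mul_sum]
          exact Finset.sum_congr rfl fun i _ => by rw [hBij i]; ring
      _ ≤ (2 * (au - aℓ) * Real.sqrt n)⁻¹ ^ 2 * (1 + δ) :=
          mul_le_mul_of_nonneg_left hr2 (by positivity)
      _ = M / n := by
          have hsq2 : Real.sqrt n ^ 2 = (n:ℝ) := Real.sq_sqrt hn0.le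
          have hinv : ((2 * (au - aℓ) * Real.sqrt n)⁻¹) ^ 2
              = 1 / (4 * (au - aℓ) ^ 2 * (n:ℝ)) := by
            have hx : (2 * (au - aℓ) * Real.sqrt n) ^ 2 = 4 * (au - aℓ) ^ 2 * (n:ℝ) := by
              rw [mul_pow, mul_pow, hsq2]
              ring
            rw [inv_pow, hx, one_div]
          rw [hinv, hMdef]
          field_simp
  -- per-coordinate quantities
  have hl2 : l ^ 2 = T * Real.log p / (2 * M) := by
    rw [hldef]
    rw [div_pow, mul_pow, ht2]
    field_simp
    ring
  have hexp : -(l * t) + l ^ 2 * v = -(2 * Real.log p) := by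
    have h1 : l * t = t ^ 2 * T / (8 * M) := by rw [hldef]; ring
    have h2 : l ^ 2 * v = T * Real.log p / (2 * M) * (4 * M / T) := by rw [hl2, hvdef]
    rw [h1, h2, ht2]
    field_simp
    ring
  have hexpval : Real.exp (-(l * t) + l ^ 2 * v) = 1 / (p:ℝ) ^ 2 := by
    rw [hexp]
    have : (2:ℝ) * Real.log p = Real.log ((p:ℝ) ^ 2) := by
      rw [Real.log_pow]; push_cast; ring
    rw [this, Real.exp_neg, Real.exp_log (by positivity)]
    rw [one_div]
  -- tail bound for each coordinate
  have hlaw' : ∀ i, Measure.map (y i) P = poissonMeasure (r i) := by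
    intro i; rw [hrdef]; exact hlaw i
  have htail : ∀ j' : Fin (p - 1),
      (P {ω | t ≤ |∑ i, (2 * (n:ℝ) / T * B i (finShift j')) *
        ((y i ω : ℝ) - ((r i : ℝ)))|}).toReal ≤ 2 / (p:ℝ) ^ 2 := by
    intro j'
    have hB2 : ∀ i, (B i (finShift j')) ^ 2 ≤ M / n := fun i =>
      le_trans (Finset.single_le_sum (f := fun i => (B i (finShift j')) ^ 2)
        (fun i _ => sq_nonneg _) (Finset.mem_univ i)) (hcol j')
    have hc1 : ∀ i, |l * (2 * (n:ℝ) / T * B i (finShift j'))| ≤ 1 := by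
      intro i
      have habs : (l * (2 * (n:ℝ) / T * B i (finShift j'))) ^ 2 ≤ 1 := by
        calc (l * (2 * (n:ℝ) / T * B i (finShift j'))) ^ 2
            = l ^ 2 * ((2 * (n:ℝ) / T) ^ 2 * (B i (finShift j')) ^ 2) := by ring
          _ ≤ l ^ 2 * ((2 * (n:ℝ) / T) ^ 2 * (M / n)) := by
              refine mul_le_mul_of_nonneg_left
                (mul_le_mul_of_nonneg_left (hB2 i) (by positivity)) (sq_nonneg l)
          _ = 2 * (n:ℝ) * Real.log p / T := by
              rw [hl2]; field_simp
          _ ≤ 1 := by rw [div_le_one hT0]; linarith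
      exact abs_le_one_iff_mul_self_le_one.mpr (by nlinarith [habs])
    have hvb : ∑ i, ((r i : ℝ)) * (2 * (n:ℝ) / T * B i (finShift j')) ^ 2 ≤ v := by
      calc ∑ i, ((r i : ℝ)) * (2 * (n:ℝ) / T * B i (finShift j')) ^ 2
          ≤ ∑ i, (4 * (n:ℝ) / T) * (B i (finShift j')) ^ 2 := by
            refine Finset.sum_le_sum fun i _ => ?_
            rw [hri i]
            have h1 : T * μ i * (2 * (n:ℝ) / T * B i (finShift j')) ^ 2
                = (T * μ i) * ((4 * (n:ℝ) ^ 2 / T ^ 2) * (B i (finShift j')) ^ 2) := by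
              ring
            rw [h1]
            have h2 : T * μ i ≤ T * (1 / (n:ℝ)) :=
              mul_le_mul_of_nonneg_left (hμub i) hT0.le
            have h3 : (0:ℝ) ≤ (4 * (n:ℝ) ^ 2 / T ^ 2) * (B i (finShift j')) ^ 2 := by
              positivity
            calc (T * μ i) * ((4 * (n:ℝ) ^ 2 / T ^ 2) * (B i (finShift j')) ^ 2)
                ≤ (T * (1 / (n:ℝ))) * ((4 * (n:ℝ) ^ 2 / T ^ 2) * (B i (finShift j')) ^ 2) :=
                  mul_le_mul_of_nonneg_right h2 h3
              _ = (4 * (n:ℝ) / T) * (B i (finShift j')) ^ 2 := by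
                  field_simp
        _ = (4 * (n:ℝ) / T) * ∑ i, (B i (finShift j')) ^ 2 := by rw [Finset.mul_sum]
        _ ≤ (4 * (n:ℝ) / T) * (M / n) :=
            mul_le_mul_of_nonneg_left (hcol j') (by positivity)
        _ = v := by rw [hvdef]; field_simp
    have h := weighted_poisson_tail P y r (fun i => 2 * (n:ℝ) / T * B i (finShift j'))
      hmeas hlaw' hindep l t v hl0 hc1 hvb
    calc (P {ω | t ≤ |∑ i, (2 * (n:ℝ) / T * B i (finShift j')) *
          ((y i ω : ℝ) - ((r i : ℝ)))|}).toReal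
        ≤ 2 * Real.exp (-(l * t) + l ^ 2 * v) := h
      _ = 2 / (p:ℝ) ^ 2 := by rw [hexpval]; ring
  -- pointwise identity between the two forms of the statistic
  have hpoint : ∀ (j' : Fin (p - 1)) (ω : Ω),
      2 * (n:ℝ) / T * ∑ i, ((y i ω : ℝ) - T * μ i) * B i (finShift j')
        = ∑ i, (2 * (n:ℝ) / T * B i (finShift j')) * ((y i ω : ℝ) - ((r i : ℝ))) := by
    intro j' ω
    rw [Finset.mul_sum]
    refine Finset.sum_congr rfl fun i _ => ?_
    rw [hri i]
    ring
  set E := {ω | ∀ j : Fin (p - 1),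
      |2 * (n:ℝ) / T * ∑ i, ((y i ω : ℝ) - T * μ i) * B i (finShift j)| ≤ t} with hEdef
  have hEmeas : MeasurableSet E := by
    have hEeq : E = ⋂ j : Fin (p - 1),
        {ω | |2 * (n:ℝ) / T * ∑ i, ((y i ω : ℝ) - T * μ i) * B i (finShift j)| ≤ t} := by
      ext ω; simp [hEdef, Set.mem_iInter]
    rw [hEeq]
    refine MeasurableSet.iInter fun j => ?_
    have hg : Measurable fun ω =>
        |2 * (n:ℝ) / T * ∑ i, ((y i ω : ℝ) - T * μ i) * B i (finShift j)| := by
      apply Measurable.abs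
      apply Measurable.const_mul
      apply Finset.measurable_sum
      intro i _
      exact ((measurable_from_top.comp (hmeas i)).sub measurable_const).mul_const _
    exact measurableSet_le hg measurable_const
  have hcompl : Eᶜ ⊆ ⋃ j' : Fin (p - 1),
      {ω | t ≤ |∑ i, (2 * (n:ℝ) / T * B i (finShift j')) *
        ((y i ω : ℝ) - ((r i : ℝ)))|} := by
    intro ω hω
    simp only [hEdef, Set.mem_compl_iff, Set.mem_setOf_eq, not_forall] at hω
    obtain ⟨j', hj'⟩ := hω
    refine Set.mem_iUnion.mpr ⟨j', ?_⟩
    simp only [Set.mem_setOf_eq]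
    rw [← hpoint j' ω]
    exact (not_le.mp hj').le
  have hsumbound : (P Eᶜ).toReal ≤ 2 / ((p:ℝ) - 1) := by
    have h1 : P Eᶜ ≤ ∑ j' : Fin (p - 1), P {ω | t ≤ |∑ i,
        (2 * (n:ℝ) / T * B i (finShift j')) * ((y i ω : ℝ) - ((r i : ℝ)))|} :=
      le_trans (measure_mono hcompl) (measure_iUnion_fintype_le _ _)
    have hne : (∑ j' : Fin (p - 1), P {ω | t ≤ |∑ i,
        (2 * (n:ℝ) / T * B i (finShift j')) * ((y i ω : ℝ) - ((r i : ℝ)))|}) ≠ ⊤ := by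
      exact (ENNReal.sum_lt_top.mpr fun _ _ => measure_lt_top P _).ne
    have h2 := ENNReal.toReal_mono hne h1
    rw [ENNReal.toReal_sum (fun _ _ => measure_ne_top P _)] at h2
    have h3 : ∑ j' : Fin (p - 1), (P {ω | t ≤ |∑ i,
        (2 * (n:ℝ) / T * B i (finShift j')) * ((y i ω : ℝ) - ((r i : ℝ)))|}).toReal
        ≤ ((p:ℝ) - 1) * (2 / (p:ℝ) ^ 2) := by
      calc _ ≤ ∑ _j' : Fin (p - 1), 2 / (p:ℝ) ^ 2 :=
            Finset.sum_le_sum fun j' _ => htail j'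
        _ = ((p - 1 : ℕ) : ℝ) * (2 / (p:ℝ) ^ 2) := by
            rw [Finset.sum_const, Finset.card_univ, Fintype.card_fin, nsmul_eq_mul]
        _ = ((p:ℝ) - 1) * (2 / (p:ℝ) ^ 2) := by
            rw [Nat.cast_sub (by omega : 1 ≤ p), Nat.cast_one]
    have h4 : ((p:ℝ) - 1) * (2 / (p:ℝ) ^ 2) ≤ 2 / ((p:ℝ) - 1) := by
      have hrw : ((p:ℝ) - 1) * (2 / (p:ℝ) ^ 2) = 2 * ((p:ℝ) - 1) / (p:ℝ) ^ 2 := by ring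
      rw [hrw, div_le_div_iff₀ (by positivity) (by linarith)]
      nlinarith
    linarith
  have hEc := measure_add_measure_compl (μ := P) hEmeas
  rw [measure_univ] at hEc
  have htr := congrArg ENNReal.toReal hEc
  rw [ENNReal.toReal_add (measure_ne_top _ _) (measure_ne_top _ _), ENNReal.toReal_one] at htr
  have hfin : 1 - 2 / ((p:ℝ) - 1) ≤ (P E).toReal := by linarith
  calc ENNReal.ofReal (1 - 2 / ((p:ℝ) - 1)) ≤ ENNReal.ofReal ((P E).toReal) :=
        ENNReal.ofReal_le_ofReal hfin
    _ = P E := ENNReal.ofReal_toReal (measure_ne_top _ _)
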